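/- For n ≥ 2, the set D_n of n-inversion sequences with e_n ≠ 0 and no two consecutive zeros has cardinality equal to the number of derangements of {1,...,n}, which satisfies |D_n| = n·|D_{n−1}| + (−1)^n. -/

import Mathlib

/-- The Finset of `n`-inversion sequences, as functions `Fin n → ℕ` with `e i ≤ i`. -/
def invSeqs (n : ℕ) : Finset (Fin n → ℕ) :=
  Fintype.piFinset (fun i => Finset.range (i.1 + 1))

/-- Extension of `e : Fin n → ℕ` to `ℕ → ℕ` by zero. -/
def ext {n : ℕ} (e : Fin n → ℕ) : ℕ → ℕ := fun i =>
  if h : i < n then e ⟨i, h⟩ else 0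

/-- The Finset `D_n` of derangement inversion sequences: `n`-inversion sequences whose
last entry is nonzero and having no two consecutive zero entries. -/
def derangeSeqs (n : ℕ) : Finset (Fin n → ℕ) :=
  (invSeqs n).filter
    (fun e => ext e (n - 1) ≠ 0 ∧ ∀ i < n - 1, ¬(ext e i = 0 ∧ ext e (i + 1) = 0))

/-- The Finset of `n`-inversion sequences with no two consecutive zeros (no condition on the
last entry). -/
def noCZ (n : ℕ) : Finset (Fin n → ℕ) :=
  (invSeqs n).filter
    (fun e => ∀ i < n - 1, ¬(ext e i = 0 ∧ ext e (i + 1) = 0))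

lemma mem_invSeqs {n : ℕ} (e : Fin n → ℕ) : e ∈ invSeqs n ↔ ∀ i : Fin n, e i ≤ i.1 := by
  simp [invSeqs, Fintype.mem_piFinset, Nat.lt_succ_iff]

lemma ext_lt {n : ℕ} (e : Fin n → ℕ) (i : ℕ) (h : i < n) : ext e i = e ⟨i, h⟩ := dif_pos h

lemma ext_init {m : ℕ} (e : Fin (m + 1) → ℕ) {i : ℕ} (hi : i < m) :
    ext (Fin.init e) i = ext e i := by
  rw [ext_lt _ i hi, ext_lt _ i (Nat.lt_succ_of_lt hi)]
  rfl

lemma ext_snoc_lt {m : ℕ} (f : Fin m → ℕ) (x : ℕ) {i : ℕ} (hi : i < m) :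
    ext (Fin.snoc f x) i = ext f i := by
  rw [ext_lt _ i (Nat.lt_succ_of_lt hi), ext_lt _ i hi]
  simp [Fin.snoc, hi]

lemma ext_snoc_last {m : ℕ} (f : Fin m → ℕ) (x : ℕ) :
    ext (Fin.snoc f x) m = x := by
  rw [ext_lt _ m (Nat.lt_succ_self m)]
  simp [Fin.snoc]

/-- Key recurrence step A: `|D_{m+1}| = m · |noCZ m|`. -/
lemma lemA (m : ℕ) (hm : 1 ≤ m) :
    (derangeSeqs (m + 1)).card = m * (noCZ m).card := by
  have hcard : ((Finset.Icc 1 m) ×ˢ (noCZ m)).card = m * (noCZ m).card := by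
    rw [Finset.card_product, Nat.card_Icc, Nat.add_sub_cancel]
  rw [← hcard]
  apply Finset.card_nbij' (fun e => (e (Fin.last m), Fin.init e))
    (fun p => Fin.snoc p.2 p.1)
  · intro e he
    rw [Finset.mem_coe, derangeSeqs, Finset.mem_filter] at he
    obtain ⟨hinv, hlast, hcons⟩ := he
    rw [mem_invSeqs] at hinv
    rw [Nat.add_sub_cancel] at hlast hcons
    rw [ext_lt _ m (Nat.lt_succ_self m)] at hlast
    have hlast' : e (Fin.last m) ≠ 0 := hlast
    refine Finset.mem_product.2 ⟨?_, ?_⟩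
    · exact Finset.mem_Icc.2 ⟨Nat.one_le_iff_ne_zero.2 hlast', hinv (Fin.last m)⟩
    · rw [noCZ, Finset.mem_filter, mem_invSeqs]
      refine ⟨fun i => hinv i.castSucc, fun i hi => ?_⟩
      have hi' : i < m := lt_of_lt_of_le hi (Nat.sub_le m 1)
      have hi1 : i + 1 < m := by omega
      rw [ext_init e hi', ext_init e hi1]
      exact hcons i hi'
  · intro p hp
    obtain ⟨hp1, hp2⟩ := Finset.mem_product.1 hp
    rw [Finset.mem_Icc] at hp1
    rw [noCZ, Finset.mem_filter, mem_invSeqs] at hp2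
    obtain ⟨hinv, hcons⟩ := hp2
    rw [Finset.mem_coe, derangeSeqs, Finset.mem_filter, mem_invSeqs, Nat.add_sub_cancel]
    beta_reduce
    refine ⟨?_, ?_, ?_⟩
    · intro i
      refine Fin.lastCases ?_ ?_ i
      · rw [Fin.snoc_last]; exact hp1.2
      · intro j; rw [Fin.snoc_castSucc]; exact hinv j
    · rw [ext_snoc_last]; omega
    · intro i hi
      rcases Nat.lt_or_ge i (m - 1) with h | h
      · rw [ext_snoc_lt _ _ (lt_of_lt_of_le h (Nat.sub_le m 1)),
          ext_snoc_lt _ _ (show i + 1 < m by omega)]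
        exact hcons i h
      · have : i + 1 = m := by omega
        rw [this, ext_snoc_last]
        intro hc
        exact absurd hc.2 (by omega)
  · intro e _; exact Fin.snoc_init_self e
  · intro p hp
    obtain ⟨_, _⟩ := Finset.mem_product.1 hp
    simp [Fin.snoc_last, Fin.init_snoc]
  -- done
/-- Key recurrence step B: for `m ≥ 2`, `|noCZ m| = |D_m| + |D_{m-1}|`. -/
lemma lemB (m : ℕ) (hm : 2 ≤ m) :
    (noCZ m).card = (derangeSeqs m).card + (derangeSeqs (m - 1)).card := by
  classical
  have hsplit :
      ((noCZ m).filter (fun e => ext e (m - 1) ≠ 0)).card +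
        ((noCZ m).filter (fun e => ¬ ext e (m - 1) ≠ 0)).card = (noCZ m).card :=
    Finset.card_filter_add_card_filter_not _
  have h1 : (noCZ m).filter (fun e => ext e (m - 1) ≠ 0) = derangeSeqs m := by
    ext e
    simp only [noCZ, derangeSeqs, Finset.mem_filter]
    tauto
  -- the zero-last-entry part is in bijection with D_{m-1}
  obtain ⟨k, rfl⟩ : ∃ k, m = k + 1 := ⟨m - 1, by omega⟩
  have hk : 1 ≤ k := by omega
  have h2 : ((noCZ (k + 1)).filter (fun e => ¬ ext e (k + 1 - 1) ≠ 0)).card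
      = (derangeSeqs k).card := by
    apply Finset.card_nbij' (fun e => Fin.init e) (fun f => Fin.snoc f 0)
    · intro e he
      rw [Finset.mem_coe, Finset.mem_filter] at he
      obtain ⟨he, hz⟩ := he
      rw [noCZ, Finset.mem_filter, mem_invSeqs, Nat.add_sub_cancel] at he
      obtain ⟨hinv, hcons⟩ := he
      rw [Nat.add_sub_cancel, not_not] at hz
      rw [Finset.mem_coe, derangeSeqs, Finset.mem_filter, mem_invSeqs]
      beta_reduce
      refine ⟨fun i => hinv i.castSucc, ?_, ?_⟩
      · have hck := hcons (k - 1) (by omega)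
        have : k - 1 + 1 = k := by omega
        rw [this] at hck
        rw [ext_init e (by omega : k - 1 < k)]
        intro h0
        exact hck ⟨h0, hz⟩
      · intro i hi
        have hi' : i < k := by omega
        have hi1 : i + 1 < k := by omega
        rw [ext_init e hi', ext_init e hi1]
        exact hcons i (by omega)
    · intro f hf
      rw [Finset.mem_coe, derangeSeqs, Finset.mem_filter, mem_invSeqs] at hf
      obtain ⟨hinv, hlast, hcons⟩ := hf
      rw [Finset.mem_coe, Finset.mem_filter, noCZ, Finset.mem_filter, mem_invSeqs,
        Nat.add_sub_cancel]
      beta_reduce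
      refine ⟨⟨?_, ?_⟩, ?_⟩
      · intro i
        refine Fin.lastCases ?_ ?_ i
        · rw [Fin.snoc_last]; exact Nat.zero_le _
        · intro j; rw [Fin.snoc_castSucc]; exact hinv j
      · intro i hi
        rcases Nat.lt_or_ge i (k - 1) with h | h
        · rw [ext_snoc_lt _ _ (show i < k by omega), ext_snoc_lt _ _ (show i + 1 < k by omega)]
          exact hcons i h
        · have hik : i = k - 1 := by omega
          rw [ext_snoc_lt _ _ (show i < k by omega)]
          intro hc
          rw [hik] at hc
          exact hlast hc.1
      · rw [not_not, ext_snoc_last]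
    · intro e he
      rw [Finset.mem_coe, Finset.mem_filter] at he
      have hz : e (Fin.last k) = 0 := by
        have h := he.2
        rw [Nat.add_sub_cancel, not_not, ext_lt e k (Nat.lt_succ_self k)] at h
        exact h
      rw [← hz]; exact Fin.snoc_init_self e
    · intro f _; simp [Fin.init_snoc]
  rw [← hsplit, h1, h2, Nat.add_sub_cancel]

lemma derange_card_eq (n : ℕ) (hn : 1 ≤ n) :
    (derangeSeqs n).card = numDerangements n := by
  induction n using Nat.strong_induction_on with
  | _ n ih =>
    match n, hn with
    | 1, _ =>
      have : derangeSeqs 1 = ∅ := by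
        apply Finset.eq_empty_of_forall_notMem
        intro e he
        rw [derangeSeqs, Finset.mem_filter, mem_invSeqs] at he
        obtain ⟨hinv, hlast, _⟩ := he
        exact hlast (by simpa [ext_lt e 0 (by norm_num)] using Nat.le_zero.1 (hinv 0))
      simp [this, numDerangements_one]
    | 2, _ =>
      have hA := lemA 1 le_rfl
      have hno : noCZ 1 = invSeqs 1 := by
        rw [noCZ]
        apply Finset.filter_true_of_mem
        intro e _ i hi
        omega
      have hcard1 : (invSeqs 1).card = 1 := by
        rw [invSeqs, Fintype.card_piFinset]
        simp
      rw [hA, hno, hcard1]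
      rfl
    | (m + 2), _ =>
      rcases Nat.lt_or_ge m 1 with hm | hm
      · interval_cases m
        have hA := lemA 1 le_rfl
        have hno : noCZ 1 = invSeqs 1 := by
          rw [noCZ]
          apply Finset.filter_true_of_mem
          intro e _ i hi
          omega
        have hcard1 : (invSeqs 1).card = 1 := by
          rw [invSeqs, Fintype.card_piFinset]
          simp
        rw [hA, hno, hcard1]
        rfl
      · have hA := lemA (m + 1) (by omega)
        have hB := lemB (m + 1) (by omega)
        rw [hA, hB, Nat.add_sub_cancel]
        rw [ih (m + 1) (by omega) (by omega), ih m (by omega) hm]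
        rw [numDerangements_add_two]
        ring

theorem stmt14 (n : ℕ) (hn : 2 ≤ n) :
    (derangeSeqs n).card
        = (Finset.univ.filter (fun σ : Equiv.Perm (Fin n) => ∀ i, σ i ≠ i)).card ∧
    ((derangeSeqs n).card : ℤ)
        = n * ((derangeSeqs (n - 1)).card : ℤ) + (-1) ^ n := by
  have hcard := derange_card_eq n (by omega)
  constructor
  · rw [hcard]
    have := card_derangements_fin_eq_numDerangements (n := n)
    rw [← this]
    rw [← Fintype.card_subtype]
    apply Fintype.card_congr
    exact Equiv.subtypeEquivRight (fun σ => Iff.rfl)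
  · obtain ⟨k, rfl⟩ : ∃ k, n = k + 2 := ⟨n - 2, by omega⟩
    have hcard' := derange_card_eq (k + 1) (by omega)
    have h21 : k + 2 - 1 = k + 1 := rfl
    rw [hcard, h21, hcard']
    have := numDerangements_succ (k + 1)
    rw [this]
    push_cast
    ring
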